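/- Let I = {1,…,κ} with κ ≥ 2, and for each i ∈ I let A_i ∈ ℝ^{d×d} be invertible with ‖A_i‖ ≤ ᾱ < 1 and let a_i ∈ ℝ^d. Let E be the attractor of the affine IFS {f_i(x) = A_i x + a_i}, and for i ∈ I set E_i = f_i(E). Define M ∈ ℝ^{κ×κ} by M_{ij} = 1 if conv(E_i) ∩ conv(E_j) ≠ ∅ and M_{ij} = 0 otherwise, where conv denotes convex hull. If M is irreducible (for all i, j there exists n > 0 with (M^n)_{ij} > 0), then for every e ∈ ℝ^d, {x·e : x ∈ E} = {x·e : x ∈ conv(E)}; in particular, {x·e : x ∈ E} is a closed interval or a single point. -/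

import Mathlib

open Set Matrix

noncomputable section

/-- operator (Euclidean) norm of a `d × d` real matrix -/
noncomputable def opN {d : ℕ} (A : Matrix (Fin d) (Fin d) ℝ) : ℝ :=
  ‖LinearMap.toContinuousLinearMap (Matrix.toEuclideanLin A)‖

/-- Proposition 5.3: if the adjacency matrix of the convex hulls of the first-level pieces
of a self-affine set is irreducible, then every linear projection of the attractor `E`
coincides with the corresponding projection of its convex hull; in particular each such
projection is a closed interval (possibly degenerate). -/
theorem projection_eq_projection_of_convexHull (d κ : ℕ) (hκ : 2 ≤ κ)
    (A : Fin κ → Matrix (Fin d) (Fin d) ℝ) (a : Fin κ → EuclideanSpace ℝ (Fin d))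
    (ᾱ : ℝ) (hᾱ : ᾱ < 1) (hinv : ∀ i, IsUnit (A i).det) (hnorm : ∀ i, opN (A i) ≤ ᾱ)
    (E : Set (EuclideanSpace ℝ (Fin d))) (hEne : E.Nonempty) (hEc : IsCompact E)
    (hattr : E = ⋃ i, (fun x => Matrix.toEuclideanLin (A i) x + a i) '' E)
    (M : Matrix (Fin κ) (Fin κ) ℝ)
    (hM1 : ∀ i j,
      (convexHull ℝ ((fun x => Matrix.toEuclideanLin (A i) x + a i) '' E) ∩
        convexHull ℝ ((fun x => Matrix.toEuclideanLin (A j) x + a j) '' E)).Nonempty →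
      M i j = 1)
    (hM0 : ∀ i j,
      ¬ (convexHull ℝ ((fun x => Matrix.toEuclideanLin (A i) x + a i) '' E) ∩
        convexHull ℝ ((fun x => Matrix.toEuclideanLin (A j) x + a j) '' E)).Nonempty →
      M i j = 0)
    (hirr : ∀ i j, ∃ n : ℕ, 0 < n ∧ 0 < (M ^ n) i j) :
    ∀ e : EuclideanSpace ℝ (Fin d),
      (fun x => (inner ℝ x e : ℝ)) '' E = (fun x => (inner ℝ x e : ℝ)) '' convexHull ℝ E ∧
      ∃ p q : ℝ, p ≤ q ∧ (fun x => (inner ℝ x e : ℝ)) '' E = Set.Icc p q := by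
  classical
  intro e
  -- the affine contractions
  let f : Fin κ → ((EuclideanSpace ℝ (Fin d)) →ᵃ[ℝ] (EuclideanSpace ℝ (Fin d))) :=
    fun i => (Matrix.toEuclideanLin (A i)).toAffineMap + AffineMap.const ℝ (EuclideanSpace ℝ (Fin d)) (a i)
  have hf : ∀ i x, f i x = Matrix.toEuclideanLin (A i) x + a i := by
    intro i x
    simp [f]
  have hfun : ∀ i, (fun x => Matrix.toEuclideanLin (A i) x + a i) = ⇑(f i) := by
    intro i; funext x; rw [hf]
  have hattr' : E = ⋃ i, f i '' E := by
    simp_rw [← hfun]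
    exact hattr
  have hsub : ∀ i, f i '' E ⊆ E := by
    intro i
    conv_rhs => rw [hattr']
    exact subset_iUnion (fun j => f j '' E) i
  -- adjacency relation on pieces
  set adj : Fin κ → Fin κ → Prop :=
    fun i j => (convexHull ℝ (f i '' E) ∩ convexHull ℝ (f j '' E)).Nonempty with hadj
  have hM1' : ∀ i j, adj i j → M i j = 1 := by
    intro i j h; exact hM1 i j (by rw [hfun i, hfun j]; exact h)
  have hM0' : ∀ i j, ¬ adj i j → M i j = 0 := by
    intro i j h; exact hM0 i j (by rw [hfun i, hfun j]; exact h)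
  have hMnn : ∀ i j, 0 ≤ M i j := by
    intro i j
    by_cases h : adj i j
    · rw [hM1' i j h]; norm_num
    · rw [hM0' i j h]
  have hpownn : ∀ n : ℕ, ∀ i j, 0 ≤ (M ^ n) i j := by
    intro n
    induction n with
    | zero =>
      intro i j
      simp only [pow_zero, Matrix.one_apply]
      split <;> norm_num
    | succ n ih =>
      intro i j
      rw [pow_succ, Matrix.mul_apply]
      exact Finset.sum_nonneg fun k _ => mul_nonneg (ih i k) (hMnn k j)
  have hpath0 : ∀ n : ℕ, ∀ i j, 0 < (M ^ n) i j → Relation.ReflTransGen adj i j := by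
    intro n
    induction n with
    | zero =>
      intro i j h
      simp only [pow_zero, Matrix.one_apply] at h
      by_cases hij : i = j
      · subst hij; exact Relation.ReflTransGen.refl
      · simp [hij] at h
    | succ n ih =>
      intro i j h
      rw [pow_succ', Matrix.mul_apply] at h
      obtain ⟨k, -, hk⟩ := Finset.exists_lt_of_sum_lt (by simpa using h :
        ∑ k : Fin κ, (0 : ℝ) < ∑ k : Fin κ, M i k * (M ^ n) k j)
      have hik : 0 < M i k := by
        rcases lt_or_eq_of_le (hMnn i k) with h' | h'
        · exact h'
        · exfalso; rw [← h'] at hk; simp at hk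
      have hkj : 0 < (M ^ n) k j := by
        rcases lt_or_eq_of_le (hpownn n k j) with h' | h'
        · exact h'
        · exfalso; rw [← h'] at hk; simp at hk
      have hadjik : adj i k := by
        by_contra hc
        rw [hM0' i k hc] at hik; exact lt_irrefl _ hik
      exact Relation.ReflTransGen.head hadjik (ih k j hkj)
  have hpath : ∀ i j, Relation.ReflTransGen adj i j := by
    intro i j
    obtain ⟨n, -, hn⟩ := hirr i j
    exact hpath0 n i j hn
  -- the coverage lemma
  have hcover : ∀ h : (EuclideanSpace ℝ (Fin d)) →ᵃ[ℝ] ℝ,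
      h '' (convexHull ℝ E) ⊆ ⋃ j, h '' (convexHull ℝ (f j '' E)) := by
    intro h
    have hpc : ∀ j, IsPreconnected (h '' (convexHull ℝ (f j '' E))) :=
      fun j => ((convex_convexHull ℝ _).affine_image h).isPreconnected
    have hrel : ∀ i j, Relation.ReflTransGen
        (fun i j => ((h '' (convexHull ℝ (f i '' E))) ∩
          (h '' (convexHull ℝ (f j '' E)))).Nonempty) i j := by
      intro i j
      refine Relation.ReflTransGen.mono ?_ i j (hpath i j)
      intro x y hxy
      obtain ⟨z, hz1, hz2⟩ := hxy
      exact ⟨h z, mem_image_of_mem _ hz1, mem_image_of_mem _ hz2⟩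
    have hS : IsPreconnected (⋃ j, h '' (convexHull ℝ (f j '' E))) :=
      IsPreconnected.iUnion_of_reflTransGen hpc hrel
    have hconv : Convex ℝ (⋃ j, h '' (convexHull ℝ (f j '' E))) :=
      convex_iff_ordConnected.mpr hS.ordConnected
    have hEsub : h '' E ⊆ ⋃ j, h '' (convexHull ℝ (f j '' E)) := by
      intro y hy
      obtain ⟨x, hx, rfl⟩ := hy
      rw [hattr'] at hx
      simp only [mem_iUnion] at hx
      obtain ⟨j, hxs⟩ := hx
      obtain ⟨z, hz, rfl⟩ := hxs
      exact mem_iUnion.mpr ⟨j, mem_image_of_mem _ (subset_convexHull ℝ _ (mem_image_of_mem _ hz))⟩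
    calc h '' convexHull ℝ E = convexHull ℝ (h '' E) := AffineMap.image_convexHull h E
      _ ⊆ _ := convexHull_min hEsub hconv
  -- the projection as an affine map
  let πa : (EuclideanSpace ℝ (Fin d)) →ᵃ[ℝ] ℝ := ((innerSL ℝ e : (EuclideanSpace ℝ (Fin d)) →L[ℝ] ℝ) : (EuclideanSpace ℝ (Fin d)) →ₗ[ℝ] ℝ).toAffineMap
  have hπa : ∀ x : (EuclideanSpace ℝ (Fin d)), πa x = (inner ℝ x e : ℝ) := by
    intro x
    simp only [πa, LinearMap.coe_toAffineMap, ContinuousLinearMap.coe_coe, innerSL_apply_apply]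
    exact (real_inner_comm e x).symm
  have hπfun : (fun x : (EuclideanSpace ℝ (Fin d)) => (inner ℝ x e : ℝ)) = ⇑πa := by
    funext x; rw [hπa]
  have hπcont : Continuous πa := by
    have : ⇑πa = ⇑(innerSL ℝ e : (EuclideanSpace ℝ (Fin d)) →L[ℝ] ℝ) := rfl
    rw [this]; exact (innerSL ℝ e).continuous
  -- basic facts about the projected set
  set K : Set ℝ := πa '' E with hK
  have hKne : K.Nonempty := hEne.image _
  have hKc : IsCompact K := hEc.image hπcont
  set p : ℝ := sInf K with hp
  set q : ℝ := sSup K with hq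
  have hpK : p ∈ K := hKc.sInf_mem hKne
  have hqK : q ∈ K := hKc.sSup_mem hKne
  have hKIcc : K ⊆ Icc p q := fun x hx =>
    ⟨csInf_le hKc.bddBelow hx, le_csSup hKc.bddAbove hx⟩
  have hpq : p ≤ q := (hKIcc hpK).2
  -- the convex hull of K is Icc p q, and equals πa '' convexHull ℝ E
  have hconvK : convexHull ℝ K = Icc p q := by
    apply Subset.antisymm
    · exact convexHull_min hKIcc (convex_Icc p q)
    · exact ((convex_convexHull ℝ K).ordConnected.out
        (subset_convexHull ℝ K hpK) (subset_convexHull ℝ K hqK))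
  have himgconv : πa '' (convexHull ℝ E) = Icc p q := by
    rw [AffineMap.image_convexHull, ← hK, hconvK]
  -- diameter bound
  have hBconv : Bornology.IsBounded (convexHull ℝ E) :=
    isBounded_convexHull.mpr hEc.isBounded
  set D : ℝ := Metric.diam (convexHull ℝ E) with hD
  have hdistD : ∀ x ∈ convexHull ℝ E, ∀ y ∈ convexHull ℝ E, dist x y ≤ D :=
    fun x hx y hy => Metric.dist_le_diam_of_mem hBconv hx hy
  -- α is nonnegative
  have hα0 : 0 ≤ ᾱ := le_trans (norm_nonneg _) (hnorm ⟨0, by omega⟩)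
  -- contraction estimate for a single map
  have hLip : ∀ i : Fin κ, ∀ x y : (EuclideanSpace ℝ (Fin d)), dist (f i x) (f i y) ≤ ᾱ * dist x y := by
    intro i x y
    rw [hf, hf]
    have h1 : Matrix.toEuclideanLin (A i) x + a i - (Matrix.toEuclideanLin (A i) y + a i)
        = Matrix.toEuclideanLin (A i) (x - y) := by
      rw [map_sub]; abel
    rw [dist_eq_norm, h1, dist_eq_norm]
    calc ‖Matrix.toEuclideanLin (A i) (x - y)‖
        = ‖LinearMap.toContinuousLinearMap (Matrix.toEuclideanLin (A i)) (x - y)‖ := by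
          rw [LinearMap.coe_toContinuousLinearMap']
      _ ≤ opN (A i) * ‖x - y‖ :=
          (LinearMap.toContinuousLinearMap (Matrix.toEuclideanLin (A i))).le_opNorm (x - y)
      _ ≤ ᾱ * ‖x - y‖ := mul_le_mul_of_nonneg_right (hnorm i) (norm_nonneg _)
  -- the main induction
  have key : ∀ t ∈ Icc p q, ∀ n : ℕ, ∃ g : (EuclideanSpace ℝ (Fin d)) →ᵃ[ℝ] (EuclideanSpace ℝ (Fin d)),
      (g '' E ⊆ E) ∧ (∀ x y : (EuclideanSpace ℝ (Fin d)), dist (g x) (g y) ≤ ᾱ ^ n * dist x y) ∧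
      t ∈ (πa.comp g) '' (convexHull ℝ E) := by
    intro t ht n
    induction n with
    | zero =>
      refine ⟨AffineMap.id ℝ (EuclideanSpace ℝ (Fin d)), by simp, by simp, ?_⟩
      have : πa.comp (AffineMap.id ℝ (EuclideanSpace ℝ (Fin d))) = πa := AffineMap.comp_id πa
      rw [this, himgconv]
      exact ht
    | succ n ih =>
      obtain ⟨g, hg1, hg2, hg3⟩ := ih
      have hmem := hcover (πa.comp g) hg3
      simp only [mem_iUnion] at hmem
      obtain ⟨j, hts⟩ := hmem
      refine ⟨g.comp (f j), ?_, ?_, ?_⟩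
      · intro y hy
        obtain ⟨x, hx, rfl⟩ := hy
        exact hg1 (mem_image_of_mem _ (hsub j (mem_image_of_mem _ hx)))
      · intro x y
        calc dist ((g.comp (f j)) x) ((g.comp (f j)) y)
            = dist (g (f j x)) (g (f j y)) := rfl
          _ ≤ ᾱ ^ n * dist (f j x) (f j y) := hg2 _ _
          _ ≤ ᾱ ^ n * (ᾱ * dist x y) :=
              mul_le_mul_of_nonneg_left (hLip j x y) (pow_nonneg hα0 n)
          _ = ᾱ ^ (n + 1) * dist x y := by ring
      · have hc : convexHull ℝ (f j '' E) = f j '' convexHull ℝ E :=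
          (AffineMap.image_convexHull (f j) E).symm
        rw [hc, ← image_comp] at hts
        have : ⇑(πa.comp g) ∘ ⇑(f j) = ⇑(πa.comp (g.comp (f j))) := rfl
        rw [this] at hts
        exact hts
  -- conclude: Icc p q ⊆ K
  obtain ⟨x0, hx0⟩ := hEne
  have hIccK : Icc p q ⊆ K := by
    intro t ht
    have hclosed : IsClosed K := hKc.isClosed
    rw [← hclosed.closure_eq]
    rw [Metric.mem_closure_iff]
    intro ε hε
    -- choose n with ‖e‖ * D * ᾱ ^ n < ε
    have htend : Filter.Tendsto (fun n : ℕ => ‖e‖ * D * ᾱ ^ n) Filter.atTop (nhds 0) := by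
      have := tendsto_pow_atTop_nhds_zero_of_lt_one hα0 hᾱ
      simpa using this.const_mul (‖e‖ * D)
    obtain ⟨n, hn⟩ := (htend.eventually_lt_const hε).exists
    obtain ⟨g, hg1, hg2, hg3⟩ := key t ht n
    obtain ⟨y, hy, hty⟩ := hg3
    refine ⟨πa (g x0), mem_image_of_mem _ (hg1 (mem_image_of_mem _ hx0)), ?_⟩
    have h1 : dist t (πa (g x0)) = dist (πa (g y)) (πa (g x0)) := by
      rw [← hty]; rfl
    rw [h1]
    have h2 : dist (πa (g y)) (πa (g x0)) ≤ ‖e‖ * dist (g y) (g x0) := by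
      rw [dist_eq_norm, dist_eq_norm]
      have hπsub : πa (g y) - πa (g x0) = (inner ℝ (g y - g x0) e : ℝ) := by
        rw [hπa, hπa, ← inner_sub_left]
      rw [hπsub]
      calc |(inner ℝ (g y - g x0) e : ℝ)| ≤ ‖g y - g x0‖ * ‖e‖ := abs_real_inner_le_norm _ _
        _ = ‖e‖ * ‖g y - g x0‖ := mul_comm _ _
    have h3 : dist (g y) (g x0) ≤ ᾱ ^ n * D := by
      calc dist (g y) (g x0) ≤ ᾱ ^ n * dist y x0 := hg2 _ _
        _ ≤ ᾱ ^ n * D := mul_le_mul_of_nonneg_left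
            (hdistD y hy x0 (subset_convexHull ℝ E hx0)) (pow_nonneg hα0 n)
    calc dist (πa (g y)) (πa (g x0)) ≤ ‖e‖ * (ᾱ ^ n * D) :=
          le_trans h2 (mul_le_mul_of_nonneg_left h3 (norm_nonneg _))
      _ = ‖e‖ * D * ᾱ ^ n := by ring
      _ < ε := hn
  have hKeq : K = Icc p q := Subset.antisymm hKIcc hIccK
  constructor
  · rw [hπfun, himgconv, ← hK, hKeq]
  · exact ⟨p, q, hpq, by rw [hπfun, ← hK, hKeq]⟩

end
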